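/- Let f : ℝ → ℝ be the logistic function f(t) = 1/(1 + e^{-t}). For every integer r ≥ 1 and every real t, the (r-1)-st derivative of f at t equals ∑_{j=1}^{r} (-1)^{j-1} (j-1)! S(r, j) f(t)^j, where S(r, j) denotes the Stirling numbers of the second kind. -/

import Mathlib

/-- Stirling numbers of the second kind: `S(n,k)` is the number of ways to partition a set
of `n` elements into `k` nonempty subsets. -/
def stirling2 : ℕ → ℕ → ℕ
  | 0, 0 => 1
  | 0, _ + 1 => 0
  | _ + 1, 0 => 0
  | n + 1, k + 1 => (k + 1) * stirling2 n (k + 1) + stirling2 n k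

noncomputable def lf : ℝ → ℝ := fun t => 1 / (1 + Real.exp (-t))

noncomputable def lc (r j : ℕ) : ℝ :=
  (-1 : ℝ) ^ (j - 1) * (Nat.factorial (j - 1) : ℝ) * (stirling2 r j : ℝ)

lemma stirling2_zero (n : ℕ) : stirling2 (n + 1) 0 = 0 := rfl

lemma stirling2_eq_zero : ∀ n k, n < k → stirling2 n k = 0 := by
  intro n
  induction n with
  | zero => intro k hk; match k, hk with
            | k + 1, _ => rfl
  | succ m ih =>
      intro k hk
      match k, hk with
      | k + 1, hk =>
        show (k + 1) * stirling2 m (k + 1) + stirling2 m k = 0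
        rw [ih (k+1) (by omega), ih k (by omega)]; ring

lemma hasDerivAt_lf (t : ℝ) : HasDerivAt lf (lf t - lf t ^ 2) t := by
  have h : HasDerivAt (fun t : ℝ => 1 + Real.exp (-t)) (-Real.exp (-t)) t := by
    have := (Real.hasDerivAt_exp (-t)).comp t (hasDerivAt_neg t)
    simpa using this.const_add 1
  have hne : 1 + Real.exp (-t) ≠ 0 := by positivity
  have h2 := h.inv hne
  have hlfe : lf = fun t => (1 + Real.exp (-t))⁻¹ := by funext s; simp [lf]
  have : HasDerivAt lf (-(-Real.exp (-t)) / (1 + Real.exp (-t)) ^ 2) t := by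
    rw [hlfe]; exact h2
  convert this using 1
  simp only [lf]
  field_simp
  ring

lemma coeff_rec (n j : ℕ) :
    lc (n + 1) j * j - lc (n + 1) (j - 1) * ((j - 1 : ℕ) : ℝ) = lc (n + 2) j := by
  match j with
  | 0 => simp [lc, stirling2_zero]
  | 1 =>
      simp only [lc]
      show _ = _ * ((1 * stirling2 (n+1) 1 + stirling2 (n+1) 0 : ℕ) : ℝ)
      simp [stirling2_zero]
  | (k + 2) =>
      simp only [lc]
      show _ = _ * (((k + 2) * stirling2 (n+1) (k+2) + stirling2 (n+1) (k+1) : ℕ) : ℝ)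
      simp only [Nat.add_sub_cancel, Nat.succ_sub_one]
      have hf : (Nat.factorial (k + 1) : ℝ) = (k + 1) * Nat.factorial k := by
        push_cast [Nat.factorial_succ]; ring
      push_cast [hf]
      ring

lemma pow_deriv_eq (j : ℕ) (x : ℝ) :
    (j : ℝ) * x ^ (j - 1) * (x - x ^ 2) = (j : ℝ) * x ^ j - (j : ℝ) * x ^ (j + 1) := by
  cases j with
  | zero => simp
  | succ k => push_cast [Nat.succ_sub_one]; ring

lemma aux (n : ℕ) : ∀ t : ℝ,
    iteratedDeriv n lf t = ∑ j ∈ Finset.range (n + 2), lc (n + 1) j * lf t ^ j := by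
  induction n with
  | zero =>
      intro t
      simp [Finset.sum_range_succ, lc, stirling2_zero, iteratedDeriv_zero]
      show lf t = (stirling2 1 1 : ℝ) * lf t
      have : stirling2 1 1 = 1 := rfl
      simp [this]
  | succ m ih =>
      intro t
      rw [iteratedDeriv_succ]
      have hfun : iteratedDeriv m lf = fun s => ∑ j ∈ Finset.range (m + 2), lc (m + 1) j * lf s ^ j :=
        funext ih
      rw [hfun]
      have hd : HasDerivAt (fun s => ∑ j ∈ Finset.range (m + 2), lc (m + 1) j * lf s ^ j)
          (∑ j ∈ Finset.range (m + 2), lc (m + 1) j * ((j : ℝ) * lf t ^ (j - 1) * (lf t - lf t ^ 2))) t := by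
        apply HasDerivAt.fun_sum
        intro j _
        exact (((hasDerivAt_lf t).pow j)).const_mul _
      rw [hd.deriv]
      have hsplit : ∀ j ∈ Finset.range (m + 2),
          lc (m + 1) j * ((j : ℝ) * lf t ^ (j - 1) * (lf t - lf t ^ 2)) =
          lc (m + 1) j * (j : ℝ) * lf t ^ j - lc (m + 1) j * (j : ℝ) * lf t ^ (j + 1) := by
        intro j _
        rw [pow_deriv_eq]; ring
      rw [Finset.sum_congr rfl hsplit, Finset.sum_sub_distrib]
      have h1 : ∑ j ∈ Finset.range (m + 2), lc (m + 1) j * (j : ℝ) * lf t ^ j =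
          ∑ j ∈ Finset.range (m + 3), lc (m + 1) j * (j : ℝ) * lf t ^ j := by
        rw [Finset.sum_range_succ (n := m + 2)]
        have : stirling2 (m + 1) (m + 2) = 0 := stirling2_eq_zero _ _ (by omega)
        simp [lc, this]
      have h2 : ∑ j ∈ Finset.range (m + 2), lc (m + 1) j * (j : ℝ) * lf t ^ (j + 1) =
          ∑ j ∈ Finset.range (m + 3), lc (m + 1) (j - 1) * ((j - 1 : ℕ) : ℝ) * lf t ^ j := by
        rw [Finset.sum_range_succ' (fun j => lc (m + 1) (j - 1) * ((j - 1 : ℕ) : ℝ) * lf t ^ j) (m + 2)]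
        simp
      rw [h1, h2, ← Finset.sum_sub_distrib]
      apply Finset.sum_congr rfl
      intro j _
      rw [← sub_mul]
      rw [show lc (m+1) j * (j:ℝ) - lc (m+1) (j-1) * ((j-1:ℕ):ℝ) = lc (m+2) j from coeff_rec m j]

theorem stmt9 (r : ℕ) (hr : 1 ≤ r) (t : ℝ) :
    iteratedDeriv (r - 1) (fun t : ℝ => 1 / (1 + Real.exp (-t))) t =
      ∑ j ∈ Finset.Icc 1 r, (-1 : ℝ) ^ (j - 1) * (Nat.factorial (j - 1) : ℝ) *
        (stirling2 r j : ℝ) * (1 / (1 + Real.exp (-t))) ^ j := by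
  obtain ⟨n, rfl⟩ : ∃ n, r = n + 1 := ⟨r - 1, (Nat.succ_pred_eq_of_pos hr).symm⟩
  have h := aux n t
  simp only [Nat.add_sub_cancel]
  have hlf : (fun t : ℝ => 1 / (1 + Real.exp (-t))) = lf := rfl
  rw [hlf, h]
  have hsub : Finset.Icc 1 (n + 1) ⊆ Finset.range (n + 2) := by
    intro x hx; simp only [Finset.mem_Icc] at hx; simp only [Finset.mem_range]; omega
  have hzero : ∀ x ∈ Finset.range (n + 2), x ∉ Finset.Icc 1 (n + 1) →
      (-1 : ℝ) ^ (x - 1) * (Nat.factorial (x - 1) : ℝ) *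
        (stirling2 (n + 1) x : ℝ) * (1 / (1 + Real.exp (-t))) ^ x = 0 := by
    intro x hx hxn
    have hx0 : x = 0 := by
      simp only [Finset.mem_range] at hx
      simp only [Finset.mem_Icc, not_and, not_le] at hxn
      omega
    subst hx0; simp [stirling2_zero]
  rw [Finset.sum_subset hsub hzero]
  apply Finset.sum_congr rfl
  intro j _
  simp [lc, lf, mul_assoc]
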